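/- Under assumptions (κ₁) for order 2 and (κ₂) with ζ > 0, for every nonnegative h ∈ B^w(ℝ₊) and every z > 0 the quantity I₁ := (‖h‖_w/ζ) sup_{j∈ℤ} |κ(e^{-j} z^m)| m ∫_{j/m}^{(j+1)/m} |v² − (log z)²| dv satisfies I₁ ≤ (‖h‖_w/ζ)[ m₂(κ)/m² + (m₁(κ)/m)(1/m + 2|log z|) + (m₀(κ)/m)(1/(3m) + |log z|) ]. -/

import Mathlib

open Real MeasureTheory

/-- Max-product Kantorovich exponential sampling operator over all integers. -/
noncomputable def MopZ (κ : ℝ → ℝ) (m : ℝ) (h : ℝ → ℝ) (z : ℝ) : ℝ :=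
  sSup (Set.range fun j : ℤ => κ (Real.exp (-(j : ℝ)) * z ^ m) *
      (m * ∫ v in (j : ℝ)/m..((j : ℝ) + 1)/m, h (Real.exp v))) /
  sSup (Set.range fun j : ℤ => κ (Real.exp (-(j : ℝ)) * z ^ m))

set_option maxHeartbeats 1600000 in
theorem I1_estimate (κ : ℝ → ℝ) (M0 M1 M2 ζ : ℝ) (hζ : 0 < ζ)
    (hinf : ∀ u ∈ Set.Icc (1 : ℝ) (Real.exp 1), ζ ≤ κ u)
    (hm0 : ∀ s : ℝ, 0 < s → ∀ j : ℤ, |κ (Real.exp (-(j : ℝ)) * s)| ≤ M0)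
    (hm1 : ∀ s : ℝ, 0 < s → ∀ j : ℤ,
      |κ (Real.exp (-(j : ℝ)) * s)| * |(j : ℝ) - Real.log s| ≤ M1)
    (hm2 : ∀ s : ℝ, 0 < s → ∀ j : ℤ,
      |κ (Real.exp (-(j : ℝ)) * s)| * |(j : ℝ) - Real.log s| ^ 2 ≤ M2)
    (N : ℝ) (hN : 0 ≤ N) (m : ℝ) (hm : 0 < m) (z : ℝ) (hz : 0 < z) :
    (N / ζ) * sSup (Set.range fun j : ℤ => |κ (Real.exp (-(j : ℝ)) * z ^ m)| *
        (m * ∫ v in (j : ℝ)/m..((j : ℝ) + 1)/m, |v ^ 2 - (Real.log z) ^ 2|)) ≤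
      (N / ζ) * (M2 / m ^ 2 + (M1 / m) * (1/m + 2 * |Real.log z|) +
        (M0 / m) * (1/(3 * m) + |Real.log z|)) := by
  set L := Real.log z with hL
  have hs : (0:ℝ) < z ^ m := Real.rpow_pos_of_pos hz m
  have hlogs : Real.log (z ^ m) = m * L := Real.log_rpow hz m
  set B := M2 / m ^ 2 + (M1 / m) * (1/m + 2 * |L|) + (M0 / m) * (1/(3 * m) + |L|) with hB
  have key : ∀ j : ℤ, |κ (Real.exp (-(j:ℝ)) * z ^ m)| *
      (m * ∫ v in (j:ℝ)/m..((j:ℝ)+1)/m, |v ^ 2 - L ^ 2|) ≤ B := by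
    intro j
    set K := |κ (Real.exp (-(j:ℝ)) * z ^ m)| with hKdef
    set d := |(j:ℝ) - Real.log (z ^ m)| with hd
    have hK0 : K ≤ M0 := hm0 _ hs j
    have hK1 : K * d ≤ M1 := hm1 _ hs j
    have hK2 : K * d ^ 2 ≤ M2 := hm2 _ hs j
    have hKnn : (0:ℝ) ≤ K := abs_nonneg _
    have hdnn : (0:ℝ) ≤ d := abs_nonneg _
    have hLnn : (0:ℝ) ≤ |L| := abs_nonneg _
    set a := (j:ℝ)/m with ha
    set b := ((j:ℝ)+1)/m with hb
    have hba : b - a = 1/m := by rw [ha, hb]; field_simp; ring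
    have hab : a ≤ b := by
      have : (0:ℝ) < 1/m := by positivity
      linarith [hba]
    set c := a - L with hc
    have hcabs : |c| = d / m := by
      have h1 : c = ((j:ℝ) - m * L) / m := by rw [hc, ha]; field_simp
      rw [h1, abs_div, abs_of_pos hm, hd, hlogs]
    have hcle : c ≤ d / m := by rw [← hcabs]; exact le_abs_self c
    have hc2 : c ^ 2 = (d / m) ^ 2 := by rw [← hcabs, sq_abs]
    have hint : (∫ v in a..b, |v ^ 2 - L ^ 2|) ≤
        ∫ v in a..b, ((v - L) ^ 2 + 2 * |L| * ((v - a) + d / m)) := by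
      apply intervalIntegral.integral_mono_on hab
      · exact (Continuous.abs (by continuity)).intervalIntegrable a b
      · exact (by continuity : Continuous fun v : ℝ =>
          (v - L) ^ 2 + 2 * |L| * ((v - a) + d / m)).intervalIntegrable a b
      · intro v hv
        have hva : a ≤ v := hv.1
        have h1 : |v - L| ≤ (v - a) + d / m := by
          calc |v - L| ≤ |v - a| + |a - L| := abs_sub_le v a L
            _ = (v - a) + d / m := by rw [abs_of_nonneg (by linarith), ← hc, hcabs]
        have h2 : L * (v - L) ≤ |L| * ((v - a) + d / m) := by
          calc L * (v - L) ≤ |L * (v - L)| := le_abs_self _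
            _ = |L| * |v - L| := abs_mul _ _
            _ ≤ |L| * ((v - a) + d / m) := mul_le_mul_of_nonneg_left h1 hLnn
        have h3 : -(|L| * ((v - a) + d / m)) ≤ L * (v - L) := by
          calc -(|L| * ((v - a) + d / m)) ≤ -(|L| * |v - L|) := by
                exact neg_le_neg (mul_le_mul_of_nonneg_left h1 hLnn)
            _ = -|L * (v - L)| := by rw [abs_mul]
            _ ≤ L * (v - L) := neg_abs_le _
        rw [abs_le]
        constructor
        · linarith [h3, sq_nonneg (v - L)]
        · linarith [h2, sq_nonneg (v - L)]
    have e1 : (∫ v in a..b, (v - L) ^ 2) = ((b - L) ^ 3 - (a - L) ^ 3) / 3 := by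
      rw [intervalIntegral.integral_comp_sub_right (fun x => x ^ 2) L,
        integral_pow]
      norm_num
    have e2 : (∫ v in a..b, ((v - a) + d / m)) = (b - a) ^ 2 / 2 + (b - a) * (d / m) := by
      rw [intervalIntegral.integral_add
        ((by continuity : Continuous fun v : ℝ => v - a).intervalIntegrable a b)
        (intervalIntegrable_const)]
      rw [intervalIntegral.integral_comp_sub_right (fun x => x) a]
      simp [integral_id, smul_eq_mul]
      ring
    have esum : (∫ v in a..b, ((v - L) ^ 2 + 2 * |L| * ((v - a) + d / m)))
        = ((b - L) ^ 3 - (a - L) ^ 3) / 3 + 2 * |L| * ((b - a) ^ 2 / 2 + (b - a) * (d / m)) := by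
      rw [intervalIntegral.integral_add
        ((by continuity : Continuous fun v : ℝ => (v - L) ^ 2).intervalIntegrable a b)
        ((by continuity : Continuous fun v : ℝ => 2 * |L| * ((v - a) + d / m)).intervalIntegrable a b),
        e1, intervalIntegral.integral_const_mul, e2]
    have hbL : b - L = c + 1/m := by rw [hc]; linarith [hba]
    have expand : m * (((b - L) ^ 3 - (a - L) ^ 3) / 3
        + 2 * |L| * ((b - a) ^ 2 / 2 + (b - a) * (d / m)))
        = c ^ 2 + c * (1/m) + 1/(3 * m ^ 2) + |L| * (1/m) + 2 * d * |L| * (1/m) := by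
      rw [hbL, hba, ← hc]
      field_simp
      ring
    have hIub : m * (∫ v in a..b, |v ^ 2 - L ^ 2|)
        ≤ c ^ 2 + c * (1/m) + 1/(3 * m ^ 2) + |L| * (1/m) + 2 * d * |L| * (1/m) := by
      rw [← expand, ← esum]
      exact mul_le_mul_of_nonneg_left hint hm.le
    have step : K * (m * ∫ v in a..b, |v ^ 2 - L ^ 2|)
        ≤ K * (c ^ 2 + c * (1/m) + 1/(3 * m ^ 2) + |L| * (1/m) + 2 * d * |L| * (1/m)) :=
      mul_le_mul_of_nonneg_left hIub hKnn
    refine step.trans ?_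
    have hm2pos : (0:ℝ) < 1 / m ^ 2 := by positivity
    have hminv : (0:ℝ) < 1 / m := by positivity
    have p1 : K * d ^ 2 * (1/m^2) ≤ M2 * (1/m^2) :=
      mul_le_mul_of_nonneg_right hK2 hm2pos.le
    have p2 : K * c ≤ K * (d/m) := mul_le_mul_of_nonneg_left hcle hKnn
    have p3 : K * d * (1/m) ≤ M1 * (1/m) := mul_le_mul_of_nonneg_right hK1 hminv.le
    have p4 : K * d * (2 * |L| / m) ≤ M1 * (2 * |L| / m) :=
      mul_le_mul_of_nonneg_right hK1 (by positivity)
    have p5 : K * (1/(3*m^2)) ≤ M0 * (1/(3*m^2)) :=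
      mul_le_mul_of_nonneg_right hK0 (by positivity)
    have p6 : K * (|L|/m) ≤ M0 * (|L|/m) :=
      mul_le_mul_of_nonneg_right hK0 (by positivity)
    have b1 : K * c ^ 2 ≤ M2 * (1/m^2) := by
      have : K * c ^ 2 = K * d ^ 2 * (1/m^2) := by rw [hc2]; field_simp
      rw [this]; exact p1
    have b2 : K * c * (1/m) ≤ M1 * (1/m^2) := by
      have h4 : K * c * (1/m) ≤ K * (d/m) * (1/m) := mul_le_mul_of_nonneg_right p2 hminv.le
      have h5 : K * (d/m) * (1/m) = K * d * (1/m^2) := by ring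
      have h6 : K * d * (1/m^2) ≤ M1 * (1/m^2) := mul_le_mul_of_nonneg_right hK1 hm2pos.le
      linarith [h4, h5 ▸ h4, h6]
    have b3 : K * (1/(3*m^2)) ≤ M0 * (1/(3*m^2)) := p5
    have b4 : K * (|L| * (1/m)) ≤ M0 * (|L| * (1/m)) :=
      mul_le_mul_of_nonneg_right hK0 (by positivity)
    have b5 : K * d * (2 * |L| * (1/m)) ≤ M1 * (2 * |L| * (1/m)) :=
      mul_le_mul_of_nonneg_right hK1 (by positivity)
    have lhs_eq : K * (c ^ 2 + c * (1/m) + 1/(3 * m ^ 2) + |L| * (1/m) + 2 * d * |L| * (1/m))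
        = K * c ^ 2 + K * c * (1/m) + K * (1/(3*m^2)) + K * (|L| * (1/m))
          + K * d * (2 * |L| * (1/m)) := by ring
    have rhs_eq : B = M2 * (1/m^2) + M1 * (1/m^2) + M1 * (2 * |L| * (1/m))
        + M0 * (1/(3*m^2)) + M0 * (|L| * (1/m)) := by
      rw [hB]; field_simp; ring
    rw [lhs_eq, rhs_eq]
    linarith [b1, b2, b3, b4, b5]
  have hsup : sSup (Set.range fun j : ℤ => |κ (Real.exp (-(j:ℝ)) * z ^ m)| *
      (m * ∫ v in (j:ℝ)/m..((j:ℝ)+1)/m, |v ^ 2 - L ^ 2|)) ≤ B := by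
    apply csSup_le (Set.range_nonempty _)
    rintro x ⟨j, rfl⟩
    exact key j
  exact mul_le_mul_of_nonneg_left hsup (div_nonneg hN hζ.le)
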